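/- Let G be a directed graph on the vertex set {1,…,N}, with neighbor sets N_κ, and for each vertex κ let f_κ : ℝⁿ × (ℝⁿ)^{N_κ} → ℝⁿ be globally Lipschitz. Fix m ≥ 1 and assign to each vertex κ an initial point x_{κ,G} ∈ ℝⁿ. Suppose a vertex i satisfies N_i^{m+1} = ∅ and a neighbor ℓ ∈ N_i satisfies N_ℓ^{m+1} = ∅. Let (χ_κ^{[i]})_{κ ∈ N̄_i^m} be the solution on [0, ∞) of the coupled system χ̇_κ(t) = f_κ(χ_κ(t), (χ_j(t))_{j ∈ N_κ}), κ ∈ N̄_i^m, with χ_κ(0) = x_{κ,G} (well defined since N_κ ⊆ N̄_i^m for each κ ∈ N̄_i^m by the assumption N_i^{m+1} = ∅), and let (χ_κ^{[ℓ]})_{κ ∈ N̄_ℓ^m} be the analogously defined solution for ℓ, with the same initial points x_{κ,G} for all κ ∈ N̄_i^m ∩ N̄_ℓ^m (consistent cell configurations). Then χ_ℓ^{[ℓ]}(t) = χ_ℓ^{[i]}(t) for all t ≥ 0. -/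

import Mathlib

/-- `hasPath E m j i` : there is a directed path of length `m` from `j` to `i`. -/
def hasPath {V : Type*} (E : V → V → Prop) : ℕ → V → V → Prop
  | 0, j, i => j = i
  | (n + 1), j, i => ∃ k, E j k ∧ hasPath E n k i

/-- The neighbor set `N_i` of `i` : vertices `j ≠ i` with an edge `(j, i)`. -/
def nbr {V : Type*} (E : V → V → Prop) (i : V) : Set V := {j | j ≠ i ∧ E j i}

/-- `nset E i m` = `N_i^m` : for `m ≥ 1`, the vertices `j ≠ i` from which `i` is
reachable by a path of length `m` but by no shorter path; `N_i^0 = {i}`. -/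
def nset {V : Type*} (E : V → V → Prop) (i : V) : ℕ → Set V
  | 0 => {i}
  | (m + 1) => {j | j ≠ i ∧ hasPath E (m + 1) j i ∧ ∀ k < m + 1, ¬ hasPath E k j i}

/-- The `m`-neighbor set `N̄_i^m = ⋃_{k ≤ m} N_i^k` of `i`. -/
def nbar {V : Type*} (E : V → V → Prop) (i : V) (m : ℕ) : Set V :=
  ⋃ k ∈ Set.Iic m, nset E i k

/-- Extending a path by one edge at the end. -/
lemma hasPath_snoc {V : Type*} {E : V → V → Prop} :
    ∀ {k : ℕ} {j x i : V}, hasPath E k j x → E x i → hasPath E (k + 1) j i := by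
  intro k
  induction k with
  | zero => intro j x i hp he; exact ⟨i, hp ▸ he, rfl⟩
  | succ k ih =>
    intro j x i hp he
    obtain ⟨w, hw, hp⟩ := hp
    exact ⟨w, hw, ih hp he⟩

/-- Membership in `nset` gives a path. -/
lemma nset_hasPath {V : Type*} {E : V → V → Prop} {x : V} :
    ∀ {k : ℕ} {j : V}, j ∈ nset E x k → hasPath E k j x := by
  intro k
  cases k with
  | zero => intro j hj; exact hj
  | succ k => intro j hj; exact hj.2.1

/-- If `N_x^{m+1} = ∅` and `j` has a path of length `≤ m+1` to `x`, then `j ∈ N̄_x^m`. -/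
lemma mem_nbar_of_hasPath {V : Type*} {E : V → V → Prop} {x : V} {m : ℕ}
    (hempty : nset E x (m + 1) = ∅) {k : ℕ} (hk : k ≤ m + 1) {j : V}
    (hp : hasPath E k j x) : j ∈ nbar E x m := by
  classical
  by_cases hjx : j = x
  · exact Set.mem_biUnion (Set.mem_Iic.2 (Nat.zero_le m)) (by simp [nset, hjx])
  · have hex : ∃ d, hasPath E d j x := ⟨k, hp⟩
    set d := Nat.find hex with hd
    have hdk : d ≤ k := Nat.find_min' hex hp
    have hdspec : hasPath E d j x := Nat.find_spec hex
    have hd0 : d ≠ 0 := by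
      intro h0
      rw [h0] at hdspec
      exact hjx hdspec
    obtain ⟨d', hdd⟩ : ∃ d', d = d' + 1 :=
      ⟨d - 1, (Nat.succ_pred_eq_of_pos (Nat.pos_of_ne_zero hd0)).symm⟩
    rw [hdd] at hdspec hdk
    have hmem : j ∈ nset E x (d' + 1) :=
      ⟨hjx, hdspec, fun k' hk' => Nat.find_min hex (hd ▸ hdd ▸ hk')⟩
    have hne : d' + 1 ≠ m + 1 := by
      intro h
      rw [h, hempty] at hmem
      exact hmem
    have hle : d' + 1 ≤ m := Nat.lt_succ_iff.1 (lt_of_le_of_ne (hdk.trans hk) hne)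
    exact Set.mem_biUnion (Set.mem_Iic.2 hle) hmem

/-- A function into a (finite) pi type is Lipschitz if all its components are,
with a common constant. -/
lemma lipschitzWith_pi_of_forall {α : Type*} [PseudoMetricSpace α] {ι : Type*} [Fintype ι]
    {π : ι → Type*} [∀ i, PseudoMetricSpace (π i)] {f : α → ∀ i, π i} {K : NNReal}
    (h : ∀ i, LipschitzWith K (fun x => f x i)) : LipschitzWith K f := by
  apply LipschitzWith.of_dist_le_mul
  intro x y
  exact (dist_pi_le_iff (by positivity)).2 fun i => (h i).dist_le_mul x y

theorem stmt16 (Nv n : ℕ) (E : Fin Nv → Fin Nv → Prop)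
    (f : Fin Nv → EuclideanSpace ℝ (Fin n) → (Fin Nv → EuclideanSpace ℝ (Fin n)) →
      EuclideanSpace ℝ (Fin n))
    (hdep : ∀ κ x b b', (∀ j ∈ nbr E κ, b j = b' j) → f κ x b = f κ x b')
    (hLip : ∀ κ, ∃ K : NNReal,
      LipschitzWith K
        (fun p : EuclideanSpace ℝ (Fin n) × (Fin Nv → EuclideanSpace ℝ (Fin n)) =>
          f κ p.1 p.2))
    (m : ℕ) (hm : 1 ≤ m)
    (xG : Fin Nv → EuclideanSpace ℝ (Fin n))
    (i ℓ : Fin Nv) (hℓ : ℓ ∈ nbr E i)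
    (hiempty : nset E i (m + 1) = ∅) (hlempty : nset E ℓ (m + 1) = ∅)
    (χi χl : Fin Nv → ℝ → EuclideanSpace ℝ (Fin n))
    (hχi0 : ∀ κ ∈ nbar E i m, χi κ 0 = xG κ)
    (hχi : ∀ κ ∈ nbar E i m, ∀ t ∈ Set.Ici (0:ℝ),
      HasDerivWithinAt (χi κ) (f κ (χi κ t) (fun j => χi j t)) (Set.Ici 0) t)
    (hχl0 : ∀ κ ∈ nbar E ℓ m, χl κ 0 = xG κ)
    (hχl : ∀ κ ∈ nbar E ℓ m, ∀ t ∈ Set.Ici (0:ℝ),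
      HasDerivWithinAt (χl κ) (f κ (χl κ t) (fun j => χl j t)) (Set.Ici 0) t) :
    ∀ t ∈ Set.Ici (0:ℝ), χl ℓ t = χi ℓ t := by
  classical
  set S : Set (Fin Nv) := nbar E ℓ m with hS
  -- S is contained in nbar E i m
  have hS_sub : S ⊆ nbar E i m := by
    intro κ hκ
    obtain ⟨k, hk, hκ⟩ := Set.mem_iUnion₂.1 hκ
    have hp : hasPath E k κ ℓ := nset_hasPath hκ
    have hp' : hasPath E (k + 1) κ i := hasPath_snoc hp hℓ.2
    exact mem_nbar_of_hasPath hiempty (Nat.succ_le_succ (Set.mem_Iic.1 hk)) hp'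
  -- S is closed under neighbors
  have hS_closed : ∀ κ ∈ S, ∀ j ∈ nbr E κ, j ∈ S := by
    intro κ hκ j hj
    obtain ⟨k, hk, hκ⟩ := Set.mem_iUnion₂.1 hκ
    have hp : hasPath E k κ ℓ := nset_hasPath hκ
    have hp' : hasPath E (k + 1) j ℓ := ⟨κ, hj.2, hp⟩
    exact mem_nbar_of_hasPath hlempty (Nat.succ_le_succ (Set.mem_Iic.1 hk)) hp'
  have hlS : ℓ ∈ S :=
    Set.mem_biUnion (Set.mem_Iic.2 (Nat.zero_le m)) (by simp [nset])
  -- Lipschitz constants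
  choose K hK using hLip
  set Kmax : NNReal := Finset.univ.sup K with hKmax
  -- the combined vector field
  set F : ℝ → (Fin Nv → EuclideanSpace ℝ (Fin n)) → (Fin Nv → EuclideanSpace ℝ (Fin n)) :=
    fun _ b κ => if κ ∈ S then f κ (b κ) b else 0 with hF
  have hFlip : ∀ t, LipschitzWith Kmax (F t) := by
    intro t
    apply lipschitzWith_pi_of_forall
    intro κ
    by_cases hκ : κ ∈ S
    · simp only [hF, if_pos hκ]
      have h1 : LipschitzWith 1
          (fun b : Fin Nv → EuclideanSpace ℝ (Fin n) => (b κ, b)) := by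
        have := (LipschitzWith.eval (i := κ)
          (α := fun _ : Fin Nv => EuclideanSpace ℝ (Fin n))).prodMk LipschitzWith.id
        simpa using this
      have := ((hK κ).comp h1).weaken (by
        simp only [mul_one]
        exact Finset.le_sup (Finset.mem_univ κ))
      exact this
    · simp only [hF, if_neg hκ]
      exact (LipschitzWith.const' (0 : EuclideanSpace ℝ (Fin n))).weaken zero_le
  -- the two combined solutions
  set y : ℝ → (Fin Nv → EuclideanSpace ℝ (Fin n)) :=
    fun t κ => if κ ∈ S then χl κ t else 0 with hy
  set z : ℝ → (Fin Nv → EuclideanSpace ℝ (Fin n)) :=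
    fun t κ => if κ ∈ S then χi κ t else 0 with hz
  have hy' : ∀ t ∈ Set.Ici (0:ℝ), HasDerivWithinAt y (F t (y t)) (Set.Ici 0) t := by
    intro t ht
    rw [hasDerivWithinAt_pi]
    intro κ
    by_cases hκ : κ ∈ S
    · have hcomp : (fun s => y s κ) = χl κ := by
        funext s; simp [hy, if_pos hκ]
      have hval : F t (y t) κ = f κ (χl κ t) (fun j => χl j t) := by
        simp only [hF, if_pos hκ, hy]
        exact hdep κ _ _ _ fun j hj => by
          rw [if_pos (hS_closed κ hκ j hj)]
      rw [hcomp, hval]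
      exact hχl κ hκ t ht
    · have hcomp : (fun s => y s κ) = fun _ => (0 : EuclideanSpace ℝ (Fin n)) := by
        funext s; simp [hy, if_neg hκ]
      have hval : F t (y t) κ = 0 := by simp [hF, if_neg hκ]
      rw [hcomp, hval]
      exact hasDerivWithinAt_const t _ 0
  have hz' : ∀ t ∈ Set.Ici (0:ℝ), HasDerivWithinAt z (F t (z t)) (Set.Ici 0) t := by
    intro t ht
    rw [hasDerivWithinAt_pi]
    intro κ
    by_cases hκ : κ ∈ S
    · have hcomp : (fun s => z s κ) = χi κ := by
        funext s; simp [hz, if_pos hκ]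
      have hval : F t (z t) κ = f κ (χi κ t) (fun j => χi j t) := by
        simp only [hF, if_pos hκ, hz]
        exact hdep κ _ _ _ fun j hj => by
          rw [if_pos (hS_closed κ hκ j hj)]
      rw [hcomp, hval]
      exact hχi κ (hS_sub hκ) t ht
    · have hcomp : (fun s => z s κ) = fun _ => (0 : EuclideanSpace ℝ (Fin n)) := by
        funext s; simp [hz, if_neg hκ]
      have hval : F t (z t) κ = 0 := by simp [hF, if_neg hκ]
      rw [hcomp, hval]
      exact hasDerivWithinAt_const t _ 0
  have h0 : y 0 = z 0 := by
    funext κ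
    by_cases hκ : κ ∈ S
    · simp only [hy, hz, if_pos hκ]
      rw [hχl0 κ hκ, hχi0 κ (hS_sub hκ)]
    · simp [hy, hz, if_neg hκ]
  -- uniqueness on [0, T]
  intro T hT
  have hT0 : (0:ℝ) ≤ T := hT
  have heq : Set.EqOn y z (Set.Icc 0 T) := by
    apply ODE_solution_unique_of_mem_Icc_right (v := F) (s := fun _ => Set.univ)
      (fun t _ => (hFlip t).lipschitzOnWith)
    · intro t ht
      exact ((hy' t ht.1).continuousWithinAt).mono Set.Icc_subset_Ici_self
    · intro t ht
      exact (hy' t ht.1).mono (Set.Ici_subset_Ici.2 ht.1)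
    · intro t _; trivial
    · intro t ht
      exact ((hz' t ht.1).continuousWithinAt).mono Set.Icc_subset_Ici_self
    · intro t ht
      exact (hz' t ht.1).mono (Set.Ici_subset_Ici.2 ht.1)
    · intro t _; trivial
    · exact h0
  have := congrFun (heq ⟨hT0, le_rfl⟩) ℓ
  simpa [hy, hz, if_pos hlS] using this
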